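/- arXiv:2104.00090 — 3 statements merged into one kernel-verified Lean document; each statement's English description precedes it below -/
import Mathlib

section
/- Suppose the fine functions form a partition of unity, Σ_{j ∈ J} B j x = 1 for all x ∈ X, and the refinement coefficients have unit column sums, Σ_{i ∈ I} h i j = 1 for every j ∈ J. Then for every active set A ⊆ J, the truncated coarse functions together with the active fine functions form a partition of unity: for all x ∈ X, Σ_{i ∈ I} trun C i x + Σ_{j ∈ A} B j x = 1. -/
/-- **Truncation preserves partition of unity.**
Fine functions `B : J → X → ℝ` form a partition of unity and the refinement
coefficients `h : I → J → ℝ` have unit column sums.  The coarse functions are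
`C i x = ∑ j, h i j * B j x` and, for an active set `A ⊆ J`, the truncated
coarse functions are `trun C i x = ∑ j ∈ Aᶜ, h i j * B j x`.  Then the truncated
coarse functions together with the active fine functions form a partition of unity. -/
theorem truncation_partition_of_unity
    {X I J : Type*} [Fintype I] [Fintype J] [DecidableEq J]
    (B : J → X → ℝ) (h : I → J → ℝ)
    (hPU : ∀ x : X, ∑ j : J, B j x = 1)
    (hcol : ∀ j : J, ∑ i : I, h i j = 1)
    (A : Finset J) (x : X) :
    ∑ i : I, (∑ j ∈ Aᶜ, h i j * B j x) + ∑ j ∈ A, B j x = 1 := by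
  have h1 : ∑ i : I, (∑ j ∈ Aᶜ, h i j * B j x) = ∑ j ∈ Aᶜ, B j x := by
    rw [Finset.sum_comm]
    refine Finset.sum_congr rfl fun j _ => ?_
    rw [← Finset.sum_mul, hcol, one_mul]
  rw [h1, Finset.sum_compl_add_sum]
  exact hPU x
end

section
/- Under the two-level THU-spline setup, the consistent-refinement identity holds: assuming the selection hypotheses — (i) for i ∈ Nf⁺ and k ∈ Faℓ with hf k i ≠ 0, k ∈ Afℓ; (ii) for i ∈ Nf⁺, k ∈ Fpℓ with hf k i ≠ 0 and m ∈ Vℓ with dℓ m k ≠ 0, m ∈ Avℓ; (iii) for i ∈ Nv⁺ and m ∈ Vℓ with hv m i ≠ 0, m ∈ Avℓ — one has, for every x ∈ X, S x = Σ_{i ∈ Af⁺} (B i x) • Q⁺ i + Σ_{j ∈ Av⁺} (trunD V j x) • P⁺ j + Σ_{k ∈ Afℓ} (trunH B k x) • Q k + Σ_{m ∈ Avℓ} (trunHD V m x) • P m. That is, the surface patch admits a representation in terms of H-active splines only, with coarse truncated F-splines trunH and doubly truncated V-splines trunHD (Eq. (41) of the paper). -/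
/-- **Consistent refinement of THU-splines (two levels, Eq. (41) of the paper).**

Two-level setup: `Fp` are the fine F-points with D-active subset `Fa` (D-passive
`Faᶜ`), `Vp` the fine D-active V-points, `Fl` the coarse F-points with D-active
subset `Fal` (D-passive `Falᶜ`), `Vl` the coarse D-active V-points.
`B` are the fine F-splines; `dp`/`dl` the fine/coarse same-level truncation
coefficients; `hv`/`hf` the refinement coefficients; `Af ⊆ Fa` and `Av` the
H-active fine subsets (H-passive `Nf = Fa \ Af`, `Nv = Avᶜ`); `Afl ⊆ Fal` and
`Avl` the H-active coarse subsets; `P`, `Q` the coarse control points.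

Fine V-splines: `trunD V j x = ∑ i ∈ Faᶜ, dp j i * B i x`.
Fine control points by refinement: `P⁺ j = ∑ k, hv k j • P k` and
`Q⁺ i = ∑ k ∈ Fal, hf k i • Q k + ∑ k ∈ Falᶜ, hf k i • (∑ m, dl m k • P m)`.
Surface patch: `S x = ∑ i ∈ Fa, B i x • Q⁺ i + ∑ j, trunD V j x • P⁺ j`.
Coarse truncated splines: `trunH B k x = ∑ i ∈ Nf, hf k i * B i x`,
`trunHD V m x = ∑ i ∈ Nf, (∑ k ∈ Falᶜ, hf k i * dl m k) * B i x
  + ∑ i ∈ Faᶜ, (∑ k ∈ Nv, hv m k * dp k i) * B i x`.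

Under the selection hypotheses (every nonzero parent of an H-passive fine spline
is H-active), the surface patch is represented by H-active splines only. -/
theorem thuSpline_consistent_refinement
    {X E : Type*} [AddCommGroup E] [Module ℝ E]
    {Fp Vp Fl Vl : Type*}
    [Fintype Fp] [DecidableEq Fp] [Fintype Vp] [DecidableEq Vp]
    [Fintype Fl] [DecidableEq Fl] [Fintype Vl]
    (Fa : Finset Fp) (Fal : Finset Fl)
    (B : Fp → X → ℝ)
    (dp : Vp → Fp → ℝ) (dl : Vl → Fl → ℝ)
    (hv : Vl → Vp → ℝ) (hf : Fl → Fp → ℝ)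
    (Af : Finset Fp) (hAf : Af ⊆ Fa)
    (Av : Finset Vp)
    (Afl : Finset Fl) (hAfl : Afl ⊆ Fal)
    (Avl : Finset Vl)
    (P : Vl → E) (Q : Fl → E)
    (hsel1 : ∀ i ∈ Fa \ Af, ∀ k ∈ Fal, hf k i ≠ 0 → k ∈ Afl)
    (hsel2 : ∀ i ∈ Fa \ Af, ∀ k ∈ Falᶜ, hf k i ≠ 0 → ∀ m : Vl, dl m k ≠ 0 → m ∈ Avl)
    (hsel3 : ∀ i ∈ Avᶜ, ∀ m : Vl, hv m i ≠ 0 → m ∈ Avl)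
    (x : X) :
    (∑ i ∈ Fa, B i x •
        (∑ k ∈ Fal, hf k i • Q k + ∑ k ∈ Falᶜ, hf k i • (∑ m : Vl, dl m k • P m))
      + ∑ j : Vp, (∑ i ∈ Faᶜ, dp j i * B i x) • (∑ k : Vl, hv k j • P k))
    =
    (∑ i ∈ Af, B i x •
        (∑ k ∈ Fal, hf k i • Q k + ∑ k ∈ Falᶜ, hf k i • (∑ m : Vl, dl m k • P m))
      + ∑ j ∈ Av, (∑ i ∈ Faᶜ, dp j i * B i x) • (∑ k : Vl, hv k j • P k)
      + ∑ k ∈ Afl, (∑ i ∈ Fa \ Af, hf k i * B i x) • Q k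
      + ∑ m ∈ Avl,
          ((∑ i ∈ Fa \ Af, (∑ k ∈ Falᶜ, hf k i * dl m k) * B i x)
            + (∑ i ∈ Faᶜ, (∑ k ∈ Avᶜ, hv m k * dp k i) * B i x)) • P m) := by

  -- split the fine sums into H-active and H-passive parts
  have split1 : (∑ i ∈ Fa, B i x •
        (∑ k ∈ Fal, hf k i • Q k + ∑ k ∈ Falᶜ, hf k i • (∑ m : Vl, dl m k • P m)))
      = (∑ i ∈ Af, B i x •
        (∑ k ∈ Fal, hf k i • Q k + ∑ k ∈ Falᶜ, hf k i • (∑ m : Vl, dl m k • P m)))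
        + (∑ i ∈ Fa \ Af, B i x •
        (∑ k ∈ Fal, hf k i • Q k + ∑ k ∈ Falᶜ, hf k i • (∑ m : Vl, dl m k • P m))) := by
    rw [add_comm, Finset.sum_sdiff hAf]
  have split2 : (∑ j : Vp, (∑ i ∈ Faᶜ, dp j i * B i x) • (∑ k : Vl, hv k j • P k))
      = (∑ j ∈ Av, (∑ i ∈ Faᶜ, dp j i * B i x) • (∑ k : Vl, hv k j • P k))
        + (∑ j ∈ Avᶜ, (∑ i ∈ Faᶜ, dp j i * B i x) • (∑ k : Vl, hv k j • P k)) := by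
    rw [Finset.sum_add_sum_compl]
  rw [split1, split2]
  -- the key claims for the H-passive remainders
  have claim1 : (∑ i ∈ Fa \ Af, B i x • (∑ k ∈ Fal, hf k i • Q k))
      = ∑ k ∈ Afl, (∑ i ∈ Fa \ Af, hf k i * B i x) • Q k := by
    have h1 : (∑ i ∈ Fa \ Af, B i x • (∑ k ∈ Fal, hf k i • Q k))
        = ∑ k ∈ Fal, (∑ i ∈ Fa \ Af, hf k i * B i x) • Q k := by
      simp_rw [Finset.smul_sum, smul_smul, Finset.sum_smul]
      rw [Finset.sum_comm]
      simp_rw [mul_comm]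
    rw [h1]
    refine (Finset.sum_subset hAfl fun k hk1 hk2 => ?_).symm
    have : (∑ i ∈ Fa \ Af, hf k i * B i x) = 0 := by
      refine Finset.sum_eq_zero fun i hi => ?_
      have : hf k i = 0 := by
        by_contra h
        exact hk2 (hsel1 i hi k hk1 h)
      simp [this]
    simp [this]
  have claim2 : (∑ i ∈ Fa \ Af, B i x • (∑ k ∈ Falᶜ, hf k i • (∑ m : Vl, dl m k • P m)))
      = ∑ m ∈ Avl, (∑ i ∈ Fa \ Af, (∑ k ∈ Falᶜ, hf k i * dl m k) * B i x) • P m := by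
    have h1 : (∑ i ∈ Fa \ Af, B i x • (∑ k ∈ Falᶜ, hf k i • (∑ m : Vl, dl m k • P m)))
        = ∑ m : Vl, (∑ i ∈ Fa \ Af, (∑ k ∈ Falᶜ, hf k i * dl m k) * B i x) • P m := by
      simp_rw [Finset.smul_sum, smul_smul, Finset.sum_smul, Finset.sum_mul]
      refine Eq.trans (Finset.sum_congr rfl fun i _ => Finset.sum_comm) ?_
      rw [Finset.sum_comm]
      refine Finset.sum_congr rfl fun m _ => Finset.sum_congr rfl fun i _ => ?_
      rw [Finset.sum_smul]
      exact Finset.sum_congr rfl fun k _ => by rw [mul_comm (B i x)]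
    rw [h1]
    refine (Finset.sum_subset (Finset.subset_univ Avl) fun m _ hm => ?_).symm
    have : (∑ i ∈ Fa \ Af, (∑ k ∈ Falᶜ, hf k i * dl m k) * B i x) = 0 := by
      refine Finset.sum_eq_zero fun i hi => ?_
      have : (∑ k ∈ Falᶜ, hf k i * dl m k) = 0 := by
        refine Finset.sum_eq_zero fun k hk => ?_
        rcases eq_or_ne (hf k i) 0 with h | h
        · simp [h]
        rcases eq_or_ne (dl m k) 0 with h' | h'
        · simp [h']
        exact absurd (hsel2 i hi k hk h m h') hm
      simp [this]
    simp [this]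
  have claim3 : (∑ j ∈ Avᶜ, (∑ i ∈ Faᶜ, dp j i * B i x) • (∑ k : Vl, hv k j • P k))
      = ∑ m ∈ Avl, (∑ i ∈ Faᶜ, (∑ k ∈ Avᶜ, hv m k * dp k i) * B i x) • P m := by
    have h1 : (∑ j ∈ Avᶜ, (∑ i ∈ Faᶜ, dp j i * B i x) • (∑ k : Vl, hv k j • P k))
        = ∑ m : Vl, (∑ i ∈ Faᶜ, (∑ k ∈ Avᶜ, hv m k * dp k i) * B i x) • P m := by
      simp_rw [Finset.smul_sum, smul_smul, Finset.sum_smul, Finset.sum_mul]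
      rw [Finset.sum_comm]
      refine Finset.sum_congr rfl fun m _ => ?_
      rw [← Finset.sum_smul, ← Finset.sum_smul]
      congr 1
      rw [Finset.sum_comm]
      exact Finset.sum_congr rfl fun i _ => Finset.sum_congr rfl fun j _ => by ring
    rw [h1]
    refine (Finset.sum_subset (Finset.subset_univ Avl) fun m _ hm => ?_).symm
    have : (∑ i ∈ Faᶜ, (∑ k ∈ Avᶜ, hv m k * dp k i) * B i x) = 0 := by
      refine Finset.sum_eq_zero fun i _ => ?_
      have : (∑ k ∈ Avᶜ, hv m k * dp k i) = 0 := by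
        refine Finset.sum_eq_zero fun k hk => ?_
        rcases eq_or_ne (hv m k) 0 with h | h
        · simp [h]
        exact absurd (hsel3 k hk m h) hm
      simp [this]
    simp [this]
  have expand : (∑ i ∈ Fa \ Af, B i x •
        (∑ k ∈ Fal, hf k i • Q k + ∑ k ∈ Falᶜ, hf k i • (∑ m : Vl, dl m k • P m)))
      = (∑ i ∈ Fa \ Af, B i x • (∑ k ∈ Fal, hf k i • Q k))
        + (∑ i ∈ Fa \ Af, B i x • (∑ k ∈ Falᶜ, hf k i • (∑ m : Vl, dl m k • P m))) := by
    rw [← Finset.sum_add_distrib]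
    exact Finset.sum_congr rfl fun i _ => smul_add _ _ _
  rw [expand, claim1, claim2, claim3]
  rw [show (∑ m ∈ Avl,
          ((∑ i ∈ Fa \ Af, (∑ k ∈ Falᶜ, hf k i * dl m k) * B i x)
            + (∑ i ∈ Faᶜ, (∑ k ∈ Avᶜ, hv m k * dp k i) * B i x)) • P m)
      = (∑ m ∈ Avl, (∑ i ∈ Fa \ Af, (∑ k ∈ Falᶜ, hf k i * dl m k) * B i x) • P m)
        + (∑ m ∈ Avl, (∑ i ∈ Faᶜ, (∑ k ∈ Avᶜ, hv m k * dp k i) * B i x) • P m) from by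
    rw [← Finset.sum_add_distrib]
    exact Finset.sum_congr rfl fun m _ => add_smul _ _ _]
  abel
end

section
/- Under the two-level THU-spline setup with E = ℝ, assume additionally: (a) the fine local D-patch basis is a partition of unity, Σ_{i ∈ Fa⁺} B i x + Σ_{j ∈ V⁺} trunD V j x = 1 for all x ∈ X; (b) unit coefficient sums Σ_{k ∈ Vℓ} hv k j = 1 for every j ∈ V⁺, Σ_{k ∈ Faℓ} hf k i + Σ_{k ∈ Fpℓ} hf k i = 1 for every i ∈ Fa⁺, and Σ_{m ∈ Vℓ} dℓ m k = 1 for every k ∈ Fpℓ; and (c) the selection hypotheses (every nonzero parent of an H-passive fine spline is H-active, as in the consistent-refinement identity). Then the THU-spline functions on the element form a partition of unity: for all x ∈ X, Σ_{i ∈ Af⁺} B i x + Σ_{j ∈ Av⁺} trunD V j x + Σ_{k ∈ Afℓ} trunH B k x + Σ_{m ∈ Avℓ} trunHD V m x = 1. -/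
/-- **Partition of unity for THU-splines on an element (two levels).**

Two-level setup: `Fp` are the fine F-points with D-active subset `Fa` (D-passive
`Faᶜ`), `Vp` the fine D-active V-points, `Fl` the coarse F-points with D-active
subset `Fal` (D-passive `Falᶜ`), `Vl` the coarse D-active V-points.
`B` are the fine F-splines; `dp`/`dl` the fine/coarse same-level truncation
coefficients; `hv`/`hf` the refinement coefficients; `Af ⊆ Fa` and `Av` the
H-active fine subsets (H-passive `Nf = Fa \ Af`, `Nv = Avᶜ`); `Afl ⊆ Fal` and
`Avl` the H-active coarse subsets.

Fine V-splines: `trunD V j x = ∑ i ∈ Faᶜ, dp j i * B i x`.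
Coarse truncated splines: `trunH B k x = ∑ i ∈ Nf, hf k i * B i x`,
`trunHD V m x = ∑ i ∈ Nf, (∑ k ∈ Falᶜ, hf k i * dl m k) * B i x
  + ∑ i ∈ Faᶜ, (∑ k ∈ Nv, hv m k * dp k i) * B i x`.

Assuming (a) the fine local D-patch basis is a partition of unity, (b) unit
coefficient sums for `hv`, `hf` and `dl`, and (c) the selection hypotheses
(every nonzero parent of an H-passive fine spline is H-active), the THU-spline
functions on the element form a partition of unity. -/
theorem thuSpline_partition_of_unity
    {X : Type*}
    {Fp Vp Fl Vl : Type*}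
    [Fintype Fp] [DecidableEq Fp] [Fintype Vp] [DecidableEq Vp]
    [Fintype Fl] [DecidableEq Fl] [Fintype Vl]
    (Fa : Finset Fp) (Fal : Finset Fl)
    (B : Fp → X → ℝ)
    (dp : Vp → Fp → ℝ) (dl : Vl → Fl → ℝ)
    (hv : Vl → Vp → ℝ) (hf : Fl → Fp → ℝ)
    (Af : Finset Fp) (hAf : Af ⊆ Fa)
    (Av : Finset Vp)
    (Afl : Finset Fl) (hAfl : Afl ⊆ Fal)
    (Avl : Finset Vl)
    (hPU : ∀ x : X, ∑ i ∈ Fa, B i x + ∑ j : Vp, (∑ i ∈ Faᶜ, dp j i * B i x) = 1)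
    (hhv : ∀ j : Vp, ∑ k : Vl, hv k j = 1)
    (hhf : ∀ i ∈ Fa, ∑ k ∈ Fal, hf k i + ∑ k ∈ Falᶜ, hf k i = 1)
    (hdl : ∀ k ∈ Falᶜ, ∑ m : Vl, dl m k = 1)
    (hsel1 : ∀ i ∈ Fa \ Af, ∀ k ∈ Fal, hf k i ≠ 0 → k ∈ Afl)
    (hsel2 : ∀ i ∈ Fa \ Af, ∀ k ∈ Falᶜ, hf k i ≠ 0 → ∀ m : Vl, dl m k ≠ 0 → m ∈ Avl)
    (hsel3 : ∀ i ∈ Avᶜ, ∀ m : Vl, hv m i ≠ 0 → m ∈ Avl)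
    (x : X) :
    ∑ i ∈ Af, B i x
      + ∑ j ∈ Av, (∑ i ∈ Faᶜ, dp j i * B i x)
      + ∑ k ∈ Afl, (∑ i ∈ Fa \ Af, hf k i * B i x)
      + ∑ m ∈ Avl,
          ((∑ i ∈ Fa \ Af, (∑ k ∈ Falᶜ, hf k i * dl m k) * B i x)
            + (∑ i ∈ Faᶜ, (∑ k ∈ Avᶜ, hv m k * dp k i) * B i x)) = 1 := by

  classical
  -- Extend Afl-sum to Fal
  have h1 : ∑ k ∈ Afl, (∑ i ∈ Fa \ Af, hf k i * B i x)
      = ∑ k ∈ Fal, (∑ i ∈ Fa \ Af, hf k i * B i x) := by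
    refine Finset.sum_subset hAfl ?_
    intro k hk hk'
    refine Finset.sum_eq_zero fun i hi => ?_
    by_cases h : hf k i = 0
    · simp [h]
    · exact absurd (hsel1 i hi k hk h) hk'
  -- Extend Avl-sum to univ
  have h2 : ∑ m ∈ Avl,
        ((∑ i ∈ Fa \ Af, (∑ k ∈ Falᶜ, hf k i * dl m k) * B i x)
          + (∑ i ∈ Faᶜ, (∑ k ∈ Avᶜ, hv m k * dp k i) * B i x))
      = ∑ m : Vl,
        ((∑ i ∈ Fa \ Af, (∑ k ∈ Falᶜ, hf k i * dl m k) * B i x)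
          + (∑ i ∈ Faᶜ, (∑ k ∈ Avᶜ, hv m k * dp k i) * B i x)) := by
    refine Finset.sum_subset (Finset.subset_univ _) ?_
    intro m _ hm
    have e1 : ∑ i ∈ Fa \ Af, (∑ k ∈ Falᶜ, hf k i * dl m k) * B i x = 0 := by
      refine Finset.sum_eq_zero fun i hi => ?_
      have : ∑ k ∈ Falᶜ, hf k i * dl m k = 0 := by
        refine Finset.sum_eq_zero fun k hk => ?_
        by_cases h : hf k i = 0
        · simp [h]
        by_cases h' : dl m k = 0
        · simp [h']
        exact absurd (hsel2 i hi k hk h m h') hm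
      rw [this, zero_mul]
    have e2 : ∑ i ∈ Faᶜ, (∑ k ∈ Avᶜ, hv m k * dp k i) * B i x = 0 := by
      refine Finset.sum_eq_zero fun i _ => ?_
      have : ∑ k ∈ Avᶜ, hv m k * dp k i = 0 := by
        refine Finset.sum_eq_zero fun k hk => ?_
        have : hv m k = 0 := by
          by_contra h; exact hm (hsel3 k hk m h)
        rw [this, zero_mul]
      rw [this, zero_mul]
    rw [e1, e2, add_zero]
  rw [h1, h2, Finset.sum_add_distrib]
  -- trunHD first part over all Vl
  have h3 : ∑ m : Vl, ∑ i ∈ Fa \ Af, (∑ k ∈ Falᶜ, hf k i * dl m k) * B i x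
      = ∑ i ∈ Fa \ Af, (∑ k ∈ Falᶜ, hf k i) * B i x := by
    rw [Finset.sum_comm]
    refine Finset.sum_congr rfl fun i _ => ?_
    rw [← Finset.sum_mul]
    congr 1
    rw [Finset.sum_comm]
    refine Finset.sum_congr rfl fun k hk => ?_
    rw [← Finset.mul_sum, hdl k hk, mul_one]
  -- trunHD second part over all Vl
  have h4 : ∑ m : Vl, ∑ i ∈ Faᶜ, (∑ k ∈ Avᶜ, hv m k * dp k i) * B i x
      = ∑ k ∈ Avᶜ, ∑ i ∈ Faᶜ, dp k i * B i x := by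
    rw [Finset.sum_comm]
    have step : ∀ i ∈ Faᶜ, ∑ m : Vl, (∑ k ∈ Avᶜ, hv m k * dp k i) * B i x
        = ∑ k ∈ Avᶜ, dp k i * B i x := by
      intro i _
      rw [← Finset.sum_mul, ← Finset.sum_mul]
      congr 1
      rw [Finset.sum_comm]
      refine Finset.sum_congr rfl fun k _ => ?_
      rw [← Finset.sum_mul, hhv k, one_mul]
    rw [Finset.sum_congr rfl step, Finset.sum_comm]
  have h5 : ∑ k ∈ Fal, ∑ i ∈ Fa \ Af, hf k i * B i x
      = ∑ i ∈ Fa \ Af, (∑ k ∈ Fal, hf k i) * B i x := by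
    rw [Finset.sum_comm]
    exact Finset.sum_congr rfl fun i _ => (Finset.sum_mul _ _ _).symm
  rw [h3, h4, h5]
  have h6 : ∑ i ∈ Fa \ Af, (∑ k ∈ Fal, hf k i) * B i x
      + ∑ i ∈ Fa \ Af, (∑ k ∈ Falᶜ, hf k i) * B i x
      = ∑ i ∈ Fa \ Af, B i x := by
    rw [← Finset.sum_add_distrib]
    refine Finset.sum_congr rfl fun i hi => ?_
    rw [← add_mul, hhf i (Finset.mem_sdiff.mp hi).1, one_mul]
  have h7 : ∑ i ∈ Af, B i x + ∑ i ∈ Fa \ Af, B i x = ∑ i ∈ Fa, B i x := by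
    rw [add_comm, Finset.sum_sdiff hAf]
  have h8 : ∑ j ∈ Av, (∑ i ∈ Faᶜ, dp j i * B i x)
      + ∑ k ∈ Avᶜ, ∑ i ∈ Faᶜ, dp k i * B i x
      = ∑ j : Vp, (∑ i ∈ Faᶜ, dp j i * B i x) :=
    Finset.sum_add_sum_compl Av _
  linarith [h6, h7, h8, hPU x]
end
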